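/- Let a, b, σ, β > 0 with b > aβ. The equation -b x + (1/2)σ² x² + β(e^{a x} - 1) - 1 = 0 has a unique negative solution x_*. -/

import Mathlib

open Real

/-- The bond-yield equation `-bx + σ²x²/2 + β(e^{ax}-1) - 1 = 0` has a unique negative
solution. -/
theorem bond_yield_root (a b σ β : ℝ)
    (ha : 0 < a) (hb : 0 < b) (hσ : 0 < σ) (hβ : 0 < β) (hba : a * β < b) :
    ∃! x : ℝ, x < 0
      ∧ -b * x + (1 / 2) * σ ^ 2 * x ^ 2 + β * (Real.exp (a * x) - 1) - 1 = 0 := by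
  set f : ℝ → ℝ := fun x => -b * x + (1 / 2) * σ ^ 2 * x ^ 2 + β * (Real.exp (a * x) - 1) - 1
    with hf
  have hcont : Continuous f := by
    unfold f; continuity
  have hderiv : ∀ x : ℝ,
      HasDerivAt f (-b + σ ^ 2 * x + β * (a * Real.exp (a * x))) x := by
    intro x
    have h1 : HasDerivAt (fun x : ℝ => -b * x) (-b * 1) x :=
      (hasDerivAt_id x).const_mul (-b)
    have h2 : HasDerivAt (fun x : ℝ => (1 / 2) * σ ^ 2 * x ^ 2)
        ((1 / 2) * σ ^ 2 * (2 * x ^ 1)) x :=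
      (hasDerivAt_pow 2 x).const_mul ((1 / 2) * σ ^ 2)
    have h3 : HasDerivAt (fun x : ℝ => Real.exp (a * x)) (Real.exp (a * x) * (a * 1)) x :=
      ((hasDerivAt_id x).const_mul a).exp
    have h4 : HasDerivAt (fun x : ℝ => β * (Real.exp (a * x) - 1))
        (β * (Real.exp (a * x) * (a * 1))) x :=
      (h3.sub_const 1).const_mul β
    have : HasDerivAt f (-b * 1 + 1 / 2 * σ ^ 2 * (2 * x ^ 1) + β * (Real.exp (a * x) * (a * 1))) x :=
      ((h1.add h2).add h4).sub_const 1
    convert this using 1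
    ring
  have hanti : StrictAntiOn f (Set.Iic 0) := by
    apply strictAntiOn_of_deriv_neg (convex_Iic 0) hcont.continuousOn
    intro x hx
    rw [interior_Iic] at hx
    rw [(hderiv x).deriv]
    have h1 : Real.exp (a * x) < 1 := by
      rw [Real.exp_lt_one_iff]
      exact mul_neg_of_pos_of_neg ha hx
    nlinarith [Real.exp_pos (a * x), sq_nonneg σ, mul_pos ha hβ,
      mul_neg_of_pos_of_neg (mul_pos hσ hσ) hx]
  have hf0 : f 0 = -1 := by simp [hf]
  set x₀ : ℝ := -(β + 2) / b with hx₀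
  have hx0neg : x₀ < 0 := div_neg_of_neg_of_pos (by linarith) hb
  have hbx0 : -b * x₀ = β + 2 := by
    rw [hx₀]; field_simp
  have hfx0 : 0 < f x₀ := by
    have h1 : 0 < Real.exp (a * x₀) := Real.exp_pos _
    have h2 : 0 ≤ (1 / 2) * σ ^ 2 * x₀ ^ 2 := by positivity
    simp only [hf]
    nlinarith
  -- existence via IVT
  have hsub : Set.Icc (f 0) (f x₀) ⊆ f '' Set.Icc x₀ 0 :=
    intermediate_value_Icc' (le_of_lt hx0neg) hcont.continuousOn
  have h0mem : (0 : ℝ) ∈ Set.Icc (f 0) (f x₀) := by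
    constructor <;> [rw [hf0]; skip] <;> linarith
  obtain ⟨c, hcmem, hfc⟩ := hsub h0mem
  have hcneg : c < 0 := by
    rcases lt_or_eq_of_le hcmem.2 with h | h
    · exact h
    · exfalso; rw [h, hf0] at hfc; linarith
  refine ⟨c, ⟨hcneg, hfc⟩, ?_⟩
  rintro y ⟨hyneg, hfy⟩
  exact hanti.injOn (le_of_lt hyneg) (le_of_lt hcneg) (by rw [hfc]; exact hfy)
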